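/- Let N ≥ 1 and let κ_ν denote the ν-th prime number (κ₁ = 2, κ₂ = 3, …). For ν = 1,…,N define the real numbers ω_{ν,1} := √(κ_{ν+1})·(3 + 2√2), ω_{ν,2} := √(κ_{ν+1}), ω_{ν,3} := √(κ_{ν+1})·(2 + √2). Then: (1) for all ν₁,ν₂,ν₃ ∈ {1,…,N}, all k₁,k₂,k₃ ∈ {1,2,3}, and all signs ε₁,ε₂,ε₃ ∈ {−1,+1}, one has ε₁ω_{ν₁,k₁} + ε₂ω_{ν₂,k₂} + ε₃ω_{ν₃,k₃} ≠ 0; and (2) for all ν_i ∈ {1,…,N}, k_i ∈ {1,2,3}, ε_i ∈ {−1,+1} (i = 1,2,3,4), one has ε₁ω_{ν₁,k₁} + ε₂ω_{ν₂,k₂} + ε₃ω_{ν₃,k₃} + ε₄ω_{ν₄,k₄} = 0 if and only if either (A) the four signed terms cancel in pairs, i.e. there is a partition of {1,2,3,4} into two two-element sets {a,b} with (ν_a,k_a) = (ν_b,k_b) and ε_a = −ε_b, or (B) there exists ν ∈ {1,…,N} such that the 4-tuple (ε₁ω_{ν₁,k₁}, ε₂ω_{ν₂,k₂}, ε₃ω_{ν₃,k₃},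 ε₄ω_{ν₄,k₄}) is a permutation of (ω_{ν,1}, ω_{ν,2}, −ω_{ν,3}, −ω_{ν,3}) or of (−ω_{ν,1}, −ω_{ν,2}, ω_{ν,3}, ω_{ν,3}). -/

import Mathlib

/-- The frequencies `ω_{ν,1} = √κ_{ν+1}(3+2√2)`, `ω_{ν,2} = √κ_{ν+1}`,
`ω_{ν,3} = √κ_{ν+1}(2+√2)`, where `κ_ν` is the `ν`-th prime (here `ν : Fin N` is 0-based,
so that `Nat.nth Nat.Prime (ν+1)` is the paper's `κ_{ν+1}` with `κ₁ = 2`). -/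
noncomputable def uniOmega (N : ℕ) (ν : Fin N) : Fin 3 → ℝ :=
  ![Real.sqrt (Nat.nth Nat.Prime (ν.1 + 1)) * (3 + 2 * Real.sqrt 2),
    Real.sqrt (Nat.nth Nat.Prime (ν.1 + 1)),
    Real.sqrt (Nat.nth Nat.Prime (ν.1 + 1)) * (2 + Real.sqrt 2)]


section Stmt19Helpers



/-- membership in ℚ(√2) -/
def Q2 (x : ℝ) : Prop := ∃ e f : ℚ, x = e + f * Real.sqrt 2

lemma q2_zero {e f : ℚ} (h : (e : ℝ) + f * Real.sqrt 2 = 0) : e = 0 ∧ f = 0 := by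
  by_cases hf : f = 0
  · subst hf
    simp at h
    exact ⟨by exact_mod_cast h, rfl⟩
  · exfalso
    apply irrational_sqrt_two
    refine ⟨-e / f, ?_⟩
    push_cast
    field_simp at h ⊢
    linarith
lemma q2_add {x y : ℝ} (hx : Q2 x) (hy : Q2 y) : Q2 (x + y) := by
  obtain ⟨a, b, rfl⟩ := hx; obtain ⟨c, d, rfl⟩ := hy
  exact ⟨a + c, b + d, by push_cast; ring⟩

lemma q2_neg {x : ℝ} (hx : Q2 x) : Q2 (-x) := by
  obtain ⟨a, b, rfl⟩ := hx
  exact ⟨-a, -b, by push_cast; ring⟩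

lemma q2_sub {x y : ℝ} (hx : Q2 x) (hy : Q2 y) : Q2 (x - y) := by
  simpa [sub_eq_add_neg] using q2_add hx (q2_neg hy)

lemma q2_mul {x y : ℝ} (hx : Q2 x) (hy : Q2 y) : Q2 (x * y) := by
  obtain ⟨a, b, rfl⟩ := hx; obtain ⟨c, d, rfl⟩ := hy
  refine ⟨a * c + 2 * b * d, a * d + b * c, ?_⟩
  have h2 : Real.sqrt 2 * Real.sqrt 2 = 2 := Real.mul_self_sqrt (by norm_num)
  push_cast
  linear_combination ((b:ℝ) * (d:ℝ)) * h2

lemma q2_rat (e : ℚ) : Q2 (e : ℝ) := ⟨e, 0, by simp⟩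

lemma q2_int (A B : ℤ) : Q2 ((A : ℝ) + B * Real.sqrt 2) := ⟨A, B, by push_cast; ring⟩

lemma q2_nat (n : ℕ) : Q2 (n : ℝ) := ⟨n, 0, by simp⟩

lemma q2_inv {x : ℝ} (hx : Q2 x) (hx0 : x ≠ 0) : Q2 x⁻¹ := by
  obtain ⟨a, b, rfl⟩ := hx
  have h2 : Real.sqrt 2 * Real.sqrt 2 = 2 := Real.mul_self_sqrt (by norm_num)
  have hconj : ((a : ℝ) - b * Real.sqrt 2) ≠ 0 := by
    intro h
    obtain ⟨h1, h2'⟩ := q2_zero (e := a) (f := -b) (by push_cast; linarith)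
    apply hx0
    simp [h1, show b = 0 by simpa using h2']
  have hd : ((a : ℝ) + b * Real.sqrt 2) * ((a : ℝ) - b * Real.sqrt 2) = (a : ℝ)^2 - 2 * b^2 := by
    nlinarith [h2]
  have hdq : ((a^2 - 2*b^2 : ℚ) : ℝ) ≠ 0 := by
    push_cast
    rw [← hd]
    exact mul_ne_zero hx0 hconj
  refine ⟨a / (a^2 - 2*b^2), -b / (a^2 - 2*b^2), ?_⟩
  have hdq' : (a^2 - 2*b^2 : ℚ) ≠ 0 := by exact_mod_cast hdq
  have hdr : ((a:ℝ)^2 - 2*(b:ℝ)^2) ≠ 0 := by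
    intro h; apply hdq; push_cast; linarith
  have hmul : ((a:ℝ) + b*Real.sqrt 2) * ((a / (a^2-2*b^2) : ℚ) + ((-b / (a^2-2*b^2) : ℚ)) * Real.sqrt 2) = 1 := by
    have hY : ((a / (a^2-2*b^2) : ℚ) : ℝ) + ((-b / (a^2-2*b^2) : ℚ) : ℝ) * Real.sqrt 2
        = ((a:ℝ) - b*Real.sqrt 2) / ((a:ℝ)^2 - 2*(b:ℝ)^2) := by
      push_cast
      field_simp
      ring
    rw [hY, mul_div_assoc', hd, div_self hdr]
  exact inv_eq_of_mul_eq_one_right hmul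

lemma q2_div {x y : ℝ} (hx : Q2 x) (hy : Q2 y) (hy0 : y ≠ 0) : Q2 (x / y) := by
  rw [div_eq_mul_inv]; exact q2_mul hx (q2_inv hy hy0)

/-- key irrationality: if `n` and `2n` are non-squares then `√n ∉ ℚ(√2)`. -/
lemma not_q2_sqrt (n : ℕ) (h1 : ¬ IsSquare n) (h2 : ¬ IsSquare (2 * n)) :
    ¬ Q2 (Real.sqrt n) := by
  rintro ⟨e, f, hef⟩
  have h2' : Real.sqrt 2 * Real.sqrt 2 = 2 := Real.mul_self_sqrt (by norm_num)
  have hsq : (n : ℝ) = e^2 + 2*f^2 + 2*e*f*Real.sqrt 2 := by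
    have := Real.sq_sqrt (show (0:ℝ) ≤ n by positivity)
    rw [hef] at this
    nlinarith [h2']
  by_cases hef0 : e * f = 0
  · rcases mul_eq_zero.1 hef0 with h0 | h0
    · -- e = 0 : √n = f √2, so √(2n) = 2f rational
      rw [h0] at hef
      apply irrational_sqrt_natCast_iff.2 h2
      refine ⟨2 * f, ?_⟩
      have : Real.sqrt (2 * n : ℕ) = Real.sqrt 2 * Real.sqrt n := by
        push_cast
        rw [Real.sqrt_mul (by norm_num)]
      rw [this, hef]
      push_cast
      linear_combination (-(f:ℝ)) * h2'
    · rw [h0] at hef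
      apply irrational_sqrt_natCast_iff.2 h1
      exact ⟨e, by simp at hef; exact hef.symm⟩
  · exfalso
    apply irrational_sqrt_two
    refine ⟨((n : ℚ) - e^2 - 2*f^2) / (2*e*f), ?_⟩
    have hef0' : ((2*e*f : ℚ) : ℝ) ≠ 0 := by
      push_cast; intro h; apply hef0
      rcases mul_eq_zero.1 h with h | h
      · rcases mul_eq_zero.1 h with h | h
        · norm_num at h
        · exact mul_eq_zero.2 (Or.inl (by exact_mod_cast h))
      · exact mul_eq_zero.2 (Or.inr (by exact_mod_cast h))
    push_cast
    push_cast at hef0'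
    have he0 : (e:ℝ) ≠ 0 := fun h => hef0' (by rw [h]; ring)
    have hf0 : (f:ℝ) ≠ 0 := fun h => hef0' (by rw [h]; ring)
    field_simp
    nlinarith [hsq]

/-- a prime times a non-multiple is not a square -/
lemma not_isSquare_prime_mul (p m : ℕ) (hp : p.Prime) (hm : ¬ p ∣ m) : ¬ IsSquare (p * m) := by
  rintro ⟨k, hk⟩
  have hpk : p ∣ k := hp.dvd_of_dvd_pow (n := 2) (by rw [pow_two, ← hk]; exact ⟨m, rfl⟩)
  obtain ⟨t, rfl⟩ := hpk
  apply hm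
  have hp0 : 0 < p := hp.pos
  have : m = p * t^2 := by
    have h' : p * m = p * (p * t^2) := by rw [hk]; ring
    exact Nat.eq_of_mul_eq_mul_left hp0 h'
  exact ⟨t^2, this⟩


lemma z2_nonzero {A B : ℤ} (h : ¬ (A = 0 ∧ B = 0)) : (A : ℝ) + B * Real.sqrt 2 ≠ 0 := by
  intro h0
  obtain ⟨h1, h2⟩ := q2_zero (e := (A:ℚ)) (f := (B:ℚ)) (by push_cast; push_cast at h0; linarith)
  exact h ⟨by exact_mod_cast h1, by exact_mod_cast h2⟩

lemma sqrt_prime_mul (p q : ℕ) : Real.sqrt (p * q : ℕ) = Real.sqrt p * Real.sqrt q := by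
  push_cast
  exact Real.sqrt_mul (by positivity) _

/-- two distinct odd primes -/
lemma notsq_pq {p q : ℕ} (hp : p.Prime) (hq : q.Prime) (hpq : p ≠ q) : ¬ IsSquare (p * q) :=
  not_isSquare_prime_mul p q hp (fun h => hpq ((Nat.prime_dvd_prime_iff_eq hp hq).1 h))

lemma notsq_2m {m : ℕ} (hm : Odd m) : ¬ IsSquare (2 * m) := by
  refine not_isSquare_prime_mul 2 m Nat.prime_two ?_
  obtain ⟨t, rfl⟩ := hm
  rintro ⟨u, hu⟩
  omega

lemma contra2 {p q : ℕ} (hp : p.Prime) (hq : q.Prime) (hop : Odd p) (hoq : Odd q)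
    (hpq : p ≠ q) {x y : ℝ} (hx : Q2 x) (hy : Q2 y) (hx0 : x ≠ 0) (hy0 : y ≠ 0)
    (h : x * Real.sqrt p + y * Real.sqrt q = 0) : False := by
  have hq0 : Real.sqrt q * Real.sqrt q = (q : ℝ) := Real.mul_self_sqrt (by positivity)
  have hpq' : Real.sqrt (p * q : ℕ) = Real.sqrt p * Real.sqrt q := sqrt_prime_mul p q
  apply not_q2_sqrt (p * q) (notsq_pq hp hq hpq) (notsq_2m (hop.mul hoq))
  have hx' : x * Real.sqrt (p*q : ℕ) = -(y * q) := by
    rw [hpq']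
    have := congrArg (· * Real.sqrt q) h
    simp only [add_mul, zero_mul, mul_assoc] at this
    rw [hq0] at this
    linarith
  have : Real.sqrt (p*q : ℕ) = -(y * q) / x := by
    field_simp at hx' ⊢
    linarith
  rw [this]
  exact q2_div (q2_neg (q2_mul hy (q2_nat q))) hx hx0

lemma contra3 {p q r : ℕ} (hp : p.Prime) (hq : q.Prime) (hop : Odd p) (hoq : Odd q)
    (hpq : p ≠ q) {x y z : ℝ} (hx : Q2 x) (hy : Q2 y) (hz : Q2 z)
    (hx0 : x ≠ 0) (hy0 : y ≠ 0)
    (h : x * Real.sqrt p + y * Real.sqrt q + z * Real.sqrt r = 0) : False := by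
  have hp0 : Real.sqrt p * Real.sqrt p = (p : ℝ) := Real.mul_self_sqrt (by positivity)
  have hq0 : Real.sqrt q * Real.sqrt q = (q : ℝ) := Real.mul_self_sqrt (by positivity)
  have hr0 : Real.sqrt r * Real.sqrt r = (r : ℝ) := Real.mul_self_sqrt (by positivity)
  have hpq' : Real.sqrt (p * q : ℕ) = Real.sqrt p * Real.sqrt q := sqrt_prime_mul p q
  apply not_q2_sqrt (p * q) (notsq_pq hp hq hpq) (notsq_2m (hop.mul hoq))
  have h2 : (x * Real.sqrt p + y * Real.sqrt q) * (x * Real.sqrt p + y * Real.sqrt q)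
      = (z * Real.sqrt r) * (z * Real.sqrt r) := by
    have h' : x * Real.sqrt p + y * Real.sqrt q = -(z * Real.sqrt r) := by linarith
    rw [h']; ring
  have hsq : (2 * x * y) * Real.sqrt (p * q : ℕ) = z*z*r - x*x*p - y*y*q := by
    rw [hpq']
    linear_combination h2 - x*x*hp0 - y*y*hq0 + z*z*hr0
  have hxy : (2 : ℝ) * x * y ≠ 0 := by
    intro h0
    rcases mul_eq_zero.1 h0 with h0 | h0
    · rcases mul_eq_zero.1 h0 with h0 | h0
      · norm_num at h0
      · exact hx0 h0
    · exact hy0 h0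
  have : Real.sqrt (p * q : ℕ) = (z*z*r - x*x*p - y*y*q) / (2 * x * y) := by
    field_simp at hsq ⊢
    linarith
  rw [this]
  refine q2_div ?_ ?_ hxy
  · exact q2_sub (q2_sub (q2_mul (q2_mul hz hz) (q2_nat r)) (q2_mul (q2_mul hx hx) (q2_nat p))) (q2_mul (q2_mul hy hy) (q2_nat q))
  · exact q2_mul (q2_mul (q2_rat 2) hx) hy


lemma contra4 {p q r s : ℕ} (hp : p.Prime) (hq : q.Prime) (hr : r.Prime) (hs : s.Prime)
    (hop : Odd p) (hoq : Odd q) (hor : Odd r) (hos : Odd s)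
    (hpq : p ≠ q) (hpr : p ≠ r) (hps : p ≠ s) (hqr : q ≠ r) (hqs : q ≠ s) (hrs : r ≠ s)
    {x y z w : ℝ} (hx : Q2 x) (hy : Q2 y) (hz : Q2 z) (hw : Q2 w)
    (hx0 : x ≠ 0) (hy0 : y ≠ 0) (hz0 : z ≠ 0) (hw0 : w ≠ 0)
    (h : x * Real.sqrt p + y * Real.sqrt q + z * Real.sqrt r + w * Real.sqrt s = 0) :
    False := by
  have hp0 : Real.sqrt p * Real.sqrt p = (p : ℝ) := Real.mul_self_sqrt (by positivity)
  have hq0 : Real.sqrt q * Real.sqrt q = (q : ℝ) := Real.mul_self_sqrt (by positivity)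
  have hr0 : Real.sqrt r * Real.sqrt r = (r : ℝ) := Real.mul_self_sqrt (by positivity)
  have hs0 : Real.sqrt s * Real.sqrt s = (s : ℝ) := Real.mul_self_sqrt (by positivity)
  have hpq' : Real.sqrt (p * q : ℕ) = Real.sqrt p * Real.sqrt q := sqrt_prime_mul p q
  have hrs' : Real.sqrt (r * s : ℕ) = Real.sqrt r * Real.sqrt s := sqrt_prime_mul r s
  have h2 : (x * Real.sqrt p + y * Real.sqrt q) * (x * Real.sqrt p + y * Real.sqrt q)
      = (z * Real.sqrt r + w * Real.sqrt s) * (z * Real.sqrt r + w * Real.sqrt s) := by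
    have h' : x * Real.sqrt p + y * Real.sqrt q = -(z * Real.sqrt r + w * Real.sqrt s) := by
      linarith
    rw [h']; ring
  obtain ⟨G, hGdef⟩ : ∃ G : ℝ, G = z*z*r + w*w*s - x*x*p - y*y*q := ⟨_, rfl⟩
  have hGq2 : Q2 G := by
    rw [hGdef]
    refine q2_sub (q2_sub (q2_add ?_ ?_) ?_) ?_ <;>
      exact q2_mul (q2_mul (by assumption) (by assumption)) (q2_nat _)
  have hsq : (2*x*y) * Real.sqrt (p * q : ℕ) = G + (2*z*w) * Real.sqrt (r * s : ℕ) := by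
    rw [hpq', hrs', hGdef]
    linear_combination h2 - x*x*hp0 - y*y*hq0 + z*z*hr0 + w*w*hs0
  have hxy : (2 : ℝ) * x * y ≠ 0 := by
    intro h0
    rcases mul_eq_zero.1 h0 with h0 | h0
    · rcases mul_eq_zero.1 h0 with h0 | h0
      · norm_num at h0
      · exact hx0 h0
    · exact hy0 h0
  have hzw : (2 : ℝ) * z * w ≠ 0 := by
    intro h0
    rcases mul_eq_zero.1 h0 with h0 | h0
    · rcases mul_eq_zero.1 h0 with h0 | h0
      · norm_num at h0
      · exact hz0 h0
    · exact hw0 h0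
  by_cases hG : G = 0
  · -- then √(pqrs) ∈ ℚ(√2)
    rw [hG, zero_add] at hsq
    have hbig : Real.sqrt ((p*q) * (r*s) : ℕ) = Real.sqrt (p*q : ℕ) * Real.sqrt (r*s : ℕ) := by
      rw [show (((p*q)*(r*s) : ℕ) : ℝ) = ((p*q:ℕ):ℝ) * ((r*s:ℕ):ℝ) by push_cast; ring]
      exact Real.sqrt_mul (by positivity) _
    have hrsq : Real.sqrt (r*s : ℕ) * Real.sqrt (r*s : ℕ) = ((r*s : ℕ) : ℝ) :=
      Real.mul_self_sqrt (by positivity)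
    have hkey : (2*x*y) * Real.sqrt ((p*q) * (r*s) : ℕ) = (2*z*w) * ((r*s : ℕ) : ℝ) := by
      rw [hbig]
      calc (2*x*y) * (Real.sqrt (p*q:ℕ) * Real.sqrt (r*s:ℕ))
          = ((2*x*y) * Real.sqrt (p*q:ℕ)) * Real.sqrt (r*s:ℕ) := by ring
        _ = ((2*z*w) * Real.sqrt (r*s:ℕ)) * Real.sqrt (r*s:ℕ) := by rw [hsq]
        _ = (2*z*w) * ((r*s:ℕ):ℝ) := by rw [mul_assoc, hrsq]
    have hform0 : Real.sqrt ((p*q)*(r*s) : ℕ) = ((2*z*w) * ((r*s:ℕ):ℝ)) / (2*x*y) := by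
      field_simp at hkey ⊢
      linarith
    have hodd : Odd ((p*q)*(r*s)) := (hop.mul hoq).mul (hor.mul hos)
    have hnots : ¬ IsSquare ((p*q)*(r*s)) := by
      have : (p*q)*(r*s) = p * (q*(r*s)) := by ring
      rw [this]
      refine not_isSquare_prime_mul _ _ hp ?_
      intro hdvd
      rcases (Nat.Prime.dvd_mul hp).1 hdvd with h' | h'
      · exact hpq ((Nat.prime_dvd_prime_iff_eq hp hq).1 h')
      · rcases (Nat.Prime.dvd_mul hp).1 h' with h'' | h''
        · exact hpr ((Nat.prime_dvd_prime_iff_eq hp hr).1 h'')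
        · exact hps ((Nat.prime_dvd_prime_iff_eq hp hs).1 h'')
    apply not_q2_sqrt _ hnots (notsq_2m hodd)
    rw [hform0]
    exact q2_div (q2_mul (q2_mul (q2_mul (q2_rat 2) hz) hw) (q2_nat _)) (q2_mul (q2_mul (q2_rat 2) hx) hy) hxy
  · -- G ≠ 0 : √(rs) ∈ ℚ(√2)
    have hpqq : Real.sqrt (p*q : ℕ) * Real.sqrt (p*q : ℕ) = ((p*q : ℕ) : ℝ) :=
      Real.mul_self_sqrt (by positivity)
    have hrsq : Real.sqrt (r*s : ℕ) * Real.sqrt (r*s : ℕ) = ((r*s : ℕ) : ℝ) :=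
      Real.mul_self_sqrt (by positivity)
    have h3 : ((2*x*y) * Real.sqrt (p*q:ℕ)) * ((2*x*y) * Real.sqrt (p*q:ℕ))
        = (G + (2*z*w) * Real.sqrt (r*s:ℕ)) * (G + (2*z*w) * Real.sqrt (r*s:ℕ)) := by
      rw [hsq]
    have h4 : (2 * G * (2*z*w)) * Real.sqrt (r*s:ℕ)
        = (2*x*y)*(2*x*y)*((p*q:ℕ):ℝ) - G*G - (2*z*w)*(2*z*w)*((r*s:ℕ):ℝ) := by
      linear_combination (-1 : ℝ)*h3 + (2*x*y)*(2*x*y)*hpqq - (2*z*w)*(2*z*w)*hrsq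
    have hden : (2 : ℝ) * G * (2*z*w) ≠ 0 := by
      intro h0
      rcases mul_eq_zero.1 h0 with h0 | h0
      · rcases mul_eq_zero.1 h0 with h0 | h0
        · norm_num at h0
        · exact hG h0
      · exact hzw h0
    have hform : Real.sqrt (r*s:ℕ)
        = ((2*x*y)*(2*x*y)*((p*q:ℕ):ℝ) - G*G - (2*z*w)*(2*z*w)*((r*s:ℕ):ℝ)) / (2*G*(2*z*w)) := by
      field_simp at h4 ⊢
      linarith
    apply not_q2_sqrt (r*s) (notsq_pq hr hs hrs) (notsq_2m (hor.mul hos))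
    rw [hform]
    refine q2_div ?_ ?_ hden
    · refine q2_sub (q2_sub (q2_mul (q2_mul ?_ ?_) (q2_nat _)) (q2_mul hGq2 hGq2)) (q2_mul (q2_mul ?_ ?_) (q2_nat _)) <;>
        exact q2_mul (q2_mul (q2_rat 2) (by assumption)) (by assumption)
    · exact q2_mul (q2_mul (q2_rat 2) hGq2) (q2_mul (q2_mul (q2_rat 2) hz) hw)


lemma sqrt_q_pos {m : ℕ} (hm : m.Prime) : 0 < Real.sqrt m :=
  Real.sqrt_pos.2 (by exact_mod_cast hm.pos)

lemma key' {ι : Type*} [DecidableEq ι] (q : ι → ℕ) (A B : ι → ℤ)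
    (hq : ∀ x, (q x).Prime ∧ Odd (q x)) (hinj : Function.Injective q) :
    ∀ s : Finset ι, s.card ≤ 4 →
      (∑ x ∈ s, ((A x : ℝ) + B x * Real.sqrt 2) * Real.sqrt (q x)) = 0 →
      ∀ x ∈ s, A x = 0 ∧ B x = 0 := by
  intro s
  induction s using Finset.strongInduction with
  | _ s ih =>
    intro hcard hsum x hx
    by_cases hzero : ∃ y ∈ s, A y = 0 ∧ B y = 0
    · obtain ⟨y, hy, hAy, hBy⟩ := hzero
      have hterm : ((A y : ℝ) + B y * Real.sqrt 2) * Real.sqrt (q y) = 0 := by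
        rw [hAy, hBy]; push_cast; ring
      have hsum' : (∑ x ∈ s.erase y, ((A x : ℝ) + B x * Real.sqrt 2) * Real.sqrt (q x)) = 0 := by
        rw [Finset.sum_erase_eq_sub hy, hsum, hterm, sub_zero]
      have hih := ih (s.erase y) (Finset.erase_ssubset hy)
        (le_trans (Finset.card_le_card (Finset.erase_subset _ _)) hcard) hsum'
      rcases eq_or_ne x y with rfl | hxy
      · exact ⟨hAy, hBy⟩
      · exact hih x (Finset.mem_erase.2 ⟨hxy, hx⟩)
    · exfalso
      have hnz : ∀ y ∈ s, ((A y : ℝ) + B y * Real.sqrt 2) ≠ 0 := by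
        intro y hy
        exact z2_nonzero (fun hc => hzero ⟨y, hy, hc⟩)
      have hq2 : ∀ y : ι, Q2 ((A y : ℝ) + B y * Real.sqrt 2) := fun y => q2_int _ _
      have h1 : 1 ≤ s.card := Finset.card_pos.2 ⟨x, hx⟩
      have hc4 : s.card = 1 ∨ s.card = 2 ∨ s.card = 3 ∨ s.card = 4 := by omega
      rcases hc4 with hc | hc | hc | hc
      · obtain ⟨a, rfl⟩ := Finset.card_eq_one.1 hc
        rw [Finset.sum_singleton] at hsum
        exact hnz a (Finset.mem_singleton_self a)
          (by
            have := sqrt_q_pos (hq a).1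
            exact (mul_eq_zero.1 hsum).resolve_right (ne_of_gt this))
      · obtain ⟨a, b, hab, rfl⟩ := Finset.card_eq_two.1 hc
        rw [Finset.sum_pair hab] at hsum
        exact contra2 (hq a).1 (hq b).1 (hq a).2 (hq b).2 (hinj.ne hab)
          (hq2 a) (hq2 b) (hnz a (by simp)) (hnz b (by simp)) hsum
      · obtain ⟨a, b, c, hab, hac, hbc, rfl⟩ := Finset.card_eq_three.1 hc
        have : (∑ x ∈ ({a, b, c} : Finset ι),
            ((A x : ℝ) + B x * Real.sqrt 2) * Real.sqrt (q x))
            = ((A a : ℝ) + B a * Real.sqrt 2) * Real.sqrt (q a)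
            + ((A b : ℝ) + B b * Real.sqrt 2) * Real.sqrt (q b)
            + ((A c : ℝ) + B c * Real.sqrt 2) * Real.sqrt (q c) := by
          rw [Finset.sum_insert (by simp [hab, hac]), Finset.sum_pair hbc, add_assoc]
        rw [this] at hsum
        exact contra3 (hq a).1 (hq b).1 (hq a).2 (hq b).2 (hinj.ne hab)
          (hq2 a) (hq2 b) (hq2 c) (hnz a (by simp)) (hnz b (by simp)) hsum
      · obtain ⟨a, t, hat, rfl, ht3⟩ := Finset.card_eq_succ.1 hc
        obtain ⟨b, c, d, hbc, hbd, hcd, rfl⟩ := Finset.card_eq_three.1 ht3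
        have hab : a ≠ b := by rintro rfl; simp at hat
        have hac : a ≠ c := by rintro rfl; simp at hat
        have had : a ≠ d := by rintro rfl; simp at hat
        have : (∑ x ∈ insert a ({b, c, d} : Finset ι),
            ((A x : ℝ) + B x * Real.sqrt 2) * Real.sqrt (q x))
            = ((A a : ℝ) + B a * Real.sqrt 2) * Real.sqrt (q a)
            + ((A b : ℝ) + B b * Real.sqrt 2) * Real.sqrt (q b)
            + ((A c : ℝ) + B c * Real.sqrt 2) * Real.sqrt (q c)
            + ((A d : ℝ) + B d * Real.sqrt 2) * Real.sqrt (q d) := by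
          rw [Finset.sum_insert hat, Finset.sum_insert (by simp [hbc, hbd]),
            Finset.sum_pair hcd]
          ring
        rw [this] at hsum
        exact contra4 (hq a).1 (hq b).1 (hq c).1 (hq d).1
          (hq a).2 (hq b).2 (hq c).2 (hq d).2
          (hinj.ne hab) (hinj.ne hac) (hinj.ne had) (hinj.ne hbc) (hinj.ne hbd) (hinj.ne hcd)
          (hq2 a) (hq2 b) (hq2 c) (hq2 d)
          (hnz a (by simp)) (hnz b (by simp)) (hnz c (by simp)) (hnz d (by simp)) hsum



def sg : Bool → ℤ := fun s => if s then 1 else -1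
def C1 : Fin 3 → ℤ := ![3, 1, 2]
def C2 : Fin 3 → ℤ := ![2, 0, 1]
def W1 : Fin 4 → ℤ := ![3, 1, -2, -2]
def W2 : Fin 4 → ℤ := ![2, 0, -1, -1]

set_option maxRecDepth 10000 in
lemma core4 : ∀ (E : Fin 4 → Bool) (k : Fin 4 → Fin 3),
    sg (E 0) * C1 (k 0) + sg (E 1) * C1 (k 1) + sg (E 2) * C1 (k 2) + sg (E 3) * C1 (k 3) = 0 →
    sg (E 0) * C2 (k 0) + sg (E 1) * C2 (k 1) + sg (E 2) * C2 (k 2) + sg (E 3) * C2 (k 3) = 0 →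
    (∃ a b c d : Fin 4, a ≠ b ∧ a ≠ c ∧ a ≠ d ∧ b ≠ c ∧ b ≠ d ∧ c ≠ d ∧
      k a = k b ∧ sg (E a) = -sg (E b) ∧ k c = k d ∧ sg (E c) = -sg (E d)) ∨
    (∃ f : Fin 4 → Fin 4, Function.Bijective f ∧
      ((∀ i, sg (E i) * C1 (k i) = W1 (f i) ∧ sg (E i) * C2 (k i) = W2 (f i)) ∨
       (∀ i, sg (E i) * C1 (k i) = -W1 (f i) ∧ sg (E i) * C2 (k i) = -W2 (f i)))) := by
  decide

lemma pairlem : ∀ (s t : Bool) (km kl : Fin 3),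
    sg s * C1 km + sg t * C1 kl = 0 → sg s * C2 km + sg t * C2 kl = 0 →
    km = kl ∧ sg s = -sg t := by decide

lemma parity3 : ∀ s t u : Bool, sg s + sg t + sg u ≠ 0 := by decide

lemma sgsub : ∀ (s : Bool) (kk : Fin 3), sg s * C1 kk - sg s * C2 kk = sg s := by decide

lemma sgne : ∀ s : Bool, sg s ≠ 0 := by decide


/-- the primes used -/
lemma nth_prime_prime (m : ℕ) : (Nat.nth Nat.Prime m).Prime := Nat.prime_nth_prime m

lemma nth_prime_odd (m : ℕ) : Odd (Nat.nth Nat.Prime (m + 1)) := by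
  have h2 : 2 ≤ Nat.nth Nat.Prime 0 := (Nat.prime_nth_prime 0).two_le
  have hlt : Nat.nth Nat.Prime 0 < Nat.nth Nat.Prime (m + 1) :=
    (Nat.nth_lt_nth Nat.infinite_setOf_prime).2 (Nat.succ_pos m)
  exact (Nat.prime_nth_prime (m+1)).odd_of_ne_two (by omega)

lemma nth_prime_inj {N : ℕ} : Function.Injective
    (fun x : Fin N => Nat.nth Nat.Prime (x.1 + 1)) := by
  intro x y h
  have := Nat.nth_injective Nat.infinite_setOf_prime h
  exact Fin.val_injective (by omega)

lemma term_eq (N : ℕ) (ν₀ : Fin N) (kk : Fin 3) (e : ℤ) :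
    (e : ℝ) * uniOmega N ν₀ kk
      = (((e * C1 kk : ℤ) : ℝ) + ((e * C2 kk : ℤ) : ℝ) * Real.sqrt 2)
          * Real.sqrt (Nat.nth Nat.Prime (ν₀.1 + 1)) := by
  fin_cases kk <;> simp [uniOmega, C1, C2] <;> push_cast <;> ring

lemma Vcoef (N : ℕ) (ν₀ : Fin N) (j : Fin 4) :
    ![uniOmega N ν₀ 0, uniOmega N ν₀ 1, -uniOmega N ν₀ 2, -uniOmega N ν₀ 2] j
      = ((W1 j : ℝ) + (W2 j : ℝ) * Real.sqrt 2)
          * Real.sqrt (Nat.nth Nat.Prime (ν₀.1 + 1)) := by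
  fin_cases j <;> simp [uniOmega, W1, W2] <;> push_cast <;> ring

lemma Vcoef_neg (N : ℕ) (ν₀ : Fin N) (j : Fin 4) :
    ![-uniOmega N ν₀ 0, -uniOmega N ν₀ 1, uniOmega N ν₀ 2, uniOmega N ν₀ 2] j
      = (((-W1 j : ℤ) : ℝ) + ((-W2 j : ℤ) : ℝ) * Real.sqrt 2)
          * Real.sqrt (Nat.nth Nat.Prime (ν₀.1 + 1)) := by
  fin_cases j <;> simp [uniOmega, W1, W2] <;> push_cast <;> ring

lemma fiber_vanish {n N : ℕ} (hn : n ≤ 4) (ν : Fin n → Fin N) (a b : Fin n → ℤ)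
    (h : ∑ i, ((a i : ℝ) + b i * Real.sqrt 2)
        * Real.sqrt (Nat.nth Nat.Prime ((ν i).1 + 1)) = 0) :
    ∀ i₀ : Fin n,
      (∑ j ∈ Finset.univ.filter (fun j => ν j = ν i₀), a j) = 0 ∧
      (∑ j ∈ Finset.univ.filter (fun j => ν j = ν i₀), b j) = 0 := by
  classical
  set q : Fin N → ℕ := fun x => Nat.nth Nat.Prime (x.1 + 1) with hq
  set A : Fin N → ℤ := fun y => ∑ j ∈ Finset.univ.filter (fun j => ν j = y), a j with hA
  set B : Fin N → ℤ := fun y => ∑ j ∈ Finset.univ.filter (fun j => ν j = y), b j with hB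
  have hgroup : (∑ y ∈ Finset.image ν Finset.univ,
      ((A y : ℝ) + B y * Real.sqrt 2) * Real.sqrt (q y)) = 0 := by
    rw [← h]
    rw [← Finset.sum_fiberwise_of_maps_to (g := ν) (t := Finset.image ν Finset.univ)
      (fun i _ => Finset.mem_image_of_mem ν (Finset.mem_univ i))
      (fun i => ((a i : ℝ) + b i * Real.sqrt 2) * Real.sqrt (q (ν i)))]
    refine Finset.sum_congr rfl (fun y hy => ?_)
    have : ∀ j ∈ Finset.univ.filter (fun j => ν j = y),
        ((a j : ℝ) + b j * Real.sqrt 2) * Real.sqrt (q (ν j))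
          = ((a j : ℝ) + b j * Real.sqrt 2) * Real.sqrt (q y) := by
      intro j hj
      rw [(Finset.mem_filter.1 hj).2]
    rw [Finset.sum_congr rfl this, ← Finset.sum_mul]
    congr 1
    rw [hA, hB]
    push_cast
    rw [Finset.sum_add_distrib, ← Finset.sum_mul]
  have hkey := key' q A B
    (fun x => ⟨nth_prime_prime _, nth_prime_odd _⟩) nth_prime_inj
    (Finset.image ν Finset.univ)
    (le_trans Finset.card_image_le (by simp [hn]))
    hgroup
  intro i₀
  exact hkey (ν i₀) (Finset.mem_image_of_mem ν (Finset.mem_univ i₀))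

end Stmt19Helpers

/-- (1) No signed sum of three of the frequencies `ω_{ν,k}` vanishes.
(2) A signed sum of four of the frequencies vanishes iff either (A) the signed terms
cancel in pairs, or (B) for some `ν` the 4-tuple of signed frequencies is a permutation
of `(ω_{ν,1}, ω_{ν,2}, -ω_{ν,3}, -ω_{ν,3})` or of `(-ω_{ν,1}, -ω_{ν,2}, ω_{ν,3}, ω_{ν,3})`. -/

theorem stmt19 (N : ℕ) (hN : 1 ≤ N) :
    (∀ (ν : Fin 3 → Fin N) (k : Fin 3 → Fin 3) (ε : Fin 3 → ℝ),
      (∀ i, ε i = 1 ∨ ε i = -1) →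
      (∑ i, ε i * uniOmega N (ν i) (k i)) ≠ 0) ∧
    (∀ (ν : Fin 4 → Fin N) (k : Fin 4 → Fin 3) (ε : Fin 4 → ℝ),
      (∀ i, ε i = 1 ∨ ε i = -1) →
      ((∑ i, ε i * uniOmega N (ν i) (k i)) = 0 ↔
        ((∃ a b c d : Fin 4, a ≠ b ∧ a ≠ c ∧ a ≠ d ∧ b ≠ c ∧ b ≠ d ∧ c ≠ d ∧
            ν a = ν b ∧ k a = k b ∧ ε a = -ε b ∧
            ν c = ν d ∧ k c = k d ∧ ε c = -ε d) ∨
          (∃ ν₀ : Fin N, ∃ σ : Equiv.Perm (Fin 4),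
            (∀ i, ε i * uniOmega N (ν i) (k i) =
              ![uniOmega N ν₀ 0, uniOmega N ν₀ 1,
                -uniOmega N ν₀ 2, -uniOmega N ν₀ 2] (σ i)) ∨
            (∀ i, ε i * uniOmega N (ν i) (k i) =
              ![-uniOmega N ν₀ 0, -uniOmega N ν₀ 1,
                uniOmega N ν₀ 2, uniOmega N ν₀ 2] (σ i)))))) := by
  classical
  constructor
  · -- Part (1)
    intro ν k ε hε h0
    obtain ⟨E, hE⟩ : ∃ E : Fin 3 → Bool, ∀ i, ε i = ((sg (E i) : ℤ) : ℝ) := by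
      refine ⟨fun i => if ε i = 1 then true else false, fun i => ?_⟩
      show ε i = ((sg (if ε i = 1 then true else false) : ℤ) : ℝ)
      rcases hε i with h | h
      · rw [if_pos h, h]; simp [sg]
      · rw [if_neg (by rw [h]; norm_num), h]; simp [sg]
    have hsum : ∑ i, (((sg (E i) * C1 (k i) : ℤ) : ℝ)
        + ((sg (E i) * C2 (k i) : ℤ) : ℝ) * Real.sqrt 2)
        * Real.sqrt (Nat.nth Nat.Prime ((ν i).1 + 1)) = 0 := by
      rw [← h0]
      refine (Finset.sum_congr rfl (fun i _ => ?_)).symm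
      rw [hE i]
      exact term_eq N (ν i) (k i) (sg (E i))
    have hfib := fiber_vanish (by norm_num) ν
      (fun i => sg (E i) * C1 (k i)) (fun i => sg (E i) * C2 (k i)) hsum
    have hfa : ∀ i₀ : Fin 3,
        ((if ν 0 = ν i₀ then sg (E 0) * C1 (k 0) else 0)
          + (if ν 1 = ν i₀ then sg (E 1) * C1 (k 1) else 0)
          + (if ν 2 = ν i₀ then sg (E 2) * C1 (k 2) else 0) = 0)
        ∧ ((if ν 0 = ν i₀ then sg (E 0) * C2 (k 0) else 0)
          + (if ν 1 = ν i₀ then sg (E 1) * C2 (k 1) else 0)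
          + (if ν 2 = ν i₀ then sg (E 2) * C2 (k 2) else 0) = 0) := by
      intro i₀
      obtain ⟨h1, h2⟩ := hfib i₀
      constructor
      · simpa only [Finset.sum_filter, Fin.sum_univ_three] using h1
      · simpa only [Finset.sum_filter, Fin.sum_univ_three] using h2
    by_cases h01 : ν 0 = ν 1 <;> by_cases h02 : ν 0 = ν 2
    · -- all equal
      obtain ⟨ha, hb⟩ := hfa 0
      rw [if_pos rfl, if_pos h01.symm, if_pos h02.symm] at ha hb
      have s0 := sgsub (E 0) (k 0)
      have s1 := sgsub (E 1) (k 1)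
      have s2 := sgsub (E 2) (k 2)
      exact parity3 (E 0) (E 1) (E 2) (by linarith)
    · -- singleton 2
      obtain ⟨ha, hb⟩ := hfa 2
      rw [if_neg h02, if_neg (fun h => h02 (h01.trans h)), if_pos rfl] at ha hb
      have s2 := sgsub (E 2) (k 2)
      exact sgne (E 2) (by linarith)
    · -- singleton 1
      obtain ⟨ha, hb⟩ := hfa 1
      rw [if_neg h01, if_pos rfl, if_neg (fun h => h01 (h02.trans h))] at ha hb
      have s1 := sgsub (E 1) (k 1)
      exact sgne (E 1) (by linarith)
    · -- singleton 0
      obtain ⟨ha, hb⟩ := hfa 0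
      rw [if_pos rfl, if_neg (fun h => h01 h.symm), if_neg (fun h => h02 h.symm)] at ha hb
      have s0 := sgsub (E 0) (k 0)
      exact sgne (E 0) (by linarith)
  · -- Part (2)
    intro ν k ε hε
    obtain ⟨E, hE⟩ : ∃ E : Fin 4 → Bool, ∀ i, ε i = ((sg (E i) : ℤ) : ℝ) := by
      refine ⟨fun i => if ε i = 1 then true else false, fun i => ?_⟩
      show ε i = ((sg (if ε i = 1 then true else false) : ℤ) : ℝ)
      rcases hε i with h | h
      · rw [if_pos h, h]; simp [sg]
      · rw [if_neg (by rw [h]; norm_num), h]; simp [sg]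
    constructor
    · -- forward
      intro h0
      have hsum : ∑ i, (((sg (E i) * C1 (k i) : ℤ) : ℝ)
          + ((sg (E i) * C2 (k i) : ℤ) : ℝ) * Real.sqrt 2)
          * Real.sqrt (Nat.nth Nat.Prime ((ν i).1 + 1)) = 0 := by
        rw [← h0]
        refine (Finset.sum_congr rfl (fun i _ => ?_)).symm
        rw [hE i]
        exact term_eq N (ν i) (k i) (sg (E i))
      have hfib := fiber_vanish (by norm_num) ν
        (fun i => sg (E i) * C1 (k i)) (fun i => sg (E i) * C2 (k i)) hsum
      have hfa : ∀ i₀ : Fin 4,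
          ((if ν 0 = ν i₀ then sg (E 0) * C1 (k 0) else 0)
            + (if ν 1 = ν i₀ then sg (E 1) * C1 (k 1) else 0)
            + (if ν 2 = ν i₀ then sg (E 2) * C1 (k 2) else 0)
            + (if ν 3 = ν i₀ then sg (E 3) * C1 (k 3) else 0) = 0)
          ∧ ((if ν 0 = ν i₀ then sg (E 0) * C2 (k 0) else 0)
            + (if ν 1 = ν i₀ then sg (E 1) * C2 (k 1) else 0)
            + (if ν 2 = ν i₀ then sg (E 2) * C2 (k 2) else 0)
            + (if ν 3 = ν i₀ then sg (E 3) * C2 (k 3) else 0) = 0) := by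
        intro i₀
        obtain ⟨h1, h2⟩ := hfib i₀
        constructor
        · simpa only [Finset.sum_filter, Fin.sum_univ_four] using h1
        · simpa only [Finset.sum_filter, Fin.sum_univ_four] using h2
      have hepair : ∀ i j : Fin 4, sg (E i) = -sg (E j) → ε i = -ε j := by
        intro i j h
        rw [hE i, hE j, h]
        push_cast
        ring
      by_cases h01 : ν 0 = ν 1 <;> by_cases h02 : ν 0 = ν 2 <;> by_cases h03 : ν 0 = ν 3
      · -- all equal
        have hν : ∀ i, ν i = ν 0 := by
          intro i
          fin_cases i
          exacts [rfl, h01.symm, h02.symm, h03.symm]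
        obtain ⟨ha, hb⟩ := hfa 0
        rw [if_pos rfl, if_pos h01.symm, if_pos h02.symm, if_pos h03.symm] at ha hb
        rcases core4 E k ha hb with ⟨a, b, c, d, hab, hac, had, hbc, hbd, hcd,
            hkab, hsab, hkcd, hscd⟩ | ⟨f, hbij, hor | hor⟩
        · exact Or.inl ⟨a, b, c, d, hab, hac, had, hbc, hbd, hcd,
            (hν a).trans (hν b).symm, hkab, hepair a b hsab,
            (hν c).trans (hν d).symm, hkcd, hepair c d hscd⟩
        · refine Or.inr ⟨ν 0, Equiv.ofBijective f hbij, Or.inl (fun i => ?_)⟩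
          rw [hE i, hν i, term_eq N (ν 0) (k i) (sg (E i)), (hor i).1, (hor i).2]
          rw [show (Equiv.ofBijective f hbij) i = f i from rfl, Vcoef]
        · refine Or.inr ⟨ν 0, Equiv.ofBijective f hbij, Or.inr (fun i => ?_)⟩
          rw [hE i, hν i, term_eq N (ν 0) (k i) (sg (E i)), (hor i).1, (hor i).2]
          rw [show (Equiv.ofBijective f hbij) i = f i from rfl, Vcoef_neg]
      · -- h01 h02 true, h03 false : singleton 3
        obtain ⟨ha, hb⟩ := hfa 3
        rw [if_neg h03, if_neg (fun h => h03 (h01.trans h)),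
          if_neg (fun h => h03 (h02.trans h)), if_pos rfl] at ha hb
        have s3 := sgsub (E 3) (k 3)
        exact absurd (by linarith : sg (E 3) = 0) (sgne (E 3))
      · -- h01 true, h02 false, h03 true : singleton 2
        obtain ⟨ha, hb⟩ := hfa 2
        rw [if_neg h02, if_neg (fun h => h02 (h01.trans h)), if_pos rfl,
          if_neg (fun h => h02 (h03.trans h))] at ha hb
        have s2 := sgsub (E 2) (k 2)
        exact absurd (by linarith : sg (E 2) = 0) (sgne (E 2))
      · -- h01 true, h02 false, h03 false
        by_cases h23 : ν 2 = ν 3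
        · -- pairs (0,1) and (2,3)
          obtain ⟨ha, hb⟩ := hfa 0
          rw [if_pos rfl, if_pos h01.symm, if_neg (fun h => h02 h.symm),
            if_neg (fun h => h03 h.symm)] at ha hb
          obtain ⟨ha2, hb2⟩ := hfa 2
          rw [if_neg h02, if_neg (fun h => h02 (h01.trans h)), if_pos rfl,
            if_pos h23.symm] at ha2 hb2
          obtain ⟨hk01, hs01⟩ := pairlem (E 0) (E 1) (k 0) (k 1)
            (by linarith) (by linarith)
          obtain ⟨hk23, hs23⟩ := pairlem (E 2) (E 3) (k 2) (k 3)
            (by linarith) (by linarith)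
          exact Or.inl ⟨0, 1, 2, 3, by decide, by decide, by decide, by decide,
            by decide, by decide, h01, hk01, hepair 0 1 hs01, h23, hk23, hepair 2 3 hs23⟩
        · -- singleton 2
          obtain ⟨ha, hb⟩ := hfa 2
          rw [if_neg h02, if_neg (fun h => h02 (h01.trans h)), if_pos rfl,
            if_neg (fun h => h23 h.symm)] at ha hb
          have s2 := sgsub (E 2) (k 2)
          exact absurd (by linarith : sg (E 2) = 0) (sgne (E 2))
      · -- h01 false, h02 true, h03 true : singleton 1
        obtain ⟨ha, hb⟩ := hfa 1
        rw [if_neg h01, if_pos rfl, if_neg (fun h => h01 (h02.trans h)),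
          if_neg (fun h => h01 (h03.trans h))] at ha hb
        have s1 := sgsub (E 1) (k 1)
        exact absurd (by linarith : sg (E 1) = 0) (sgne (E 1))
      · -- h01 false, h02 true, h03 false
        by_cases h13 : ν 1 = ν 3
        · -- pairs (0,2) and (1,3)
          obtain ⟨ha, hb⟩ := hfa 0
          rw [if_pos rfl, if_neg (fun h => h01 h.symm), if_pos h02.symm,
            if_neg (fun h => h03 h.symm)] at ha hb
          obtain ⟨ha2, hb2⟩ := hfa 1
          rw [if_neg h01, if_pos rfl, if_neg (fun h => h01 (h02.trans h)),
            if_pos h13.symm] at ha2 hb2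
          obtain ⟨hk02, hs02⟩ := pairlem (E 0) (E 2) (k 0) (k 2)
            (by linarith) (by linarith)
          obtain ⟨hk13, hs13⟩ := pairlem (E 1) (E 3) (k 1) (k 3)
            (by linarith) (by linarith)
          exact Or.inl ⟨0, 2, 1, 3, by decide, by decide, by decide, by decide,
            by decide, by decide, h02, hk02, hepair 0 2 hs02, h13, hk13, hepair 1 3 hs13⟩
        · -- singleton 1
          obtain ⟨ha, hb⟩ := hfa 1
          rw [if_neg h01, if_pos rfl, if_neg (fun h => h01 (h02.trans h)),
            if_neg (fun h => h13 h.symm)] at ha hb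
          have s1 := sgsub (E 1) (k 1)
          exact absurd (by linarith : sg (E 1) = 0) (sgne (E 1))
      · -- h01 false, h02 false, h03 true
        by_cases h12 : ν 1 = ν 2
        · -- pairs (0,3) and (1,2)
          obtain ⟨ha, hb⟩ := hfa 0
          rw [if_pos rfl, if_neg (fun h => h01 h.symm), if_neg (fun h => h02 h.symm),
            if_pos h03.symm] at ha hb
          obtain ⟨ha2, hb2⟩ := hfa 1
          rw [if_neg h01, if_pos rfl, if_pos h12.symm,
            if_neg (fun h => h01 (h03.trans h))] at ha2 hb2
          obtain ⟨hk03, hs03⟩ := pairlem (E 0) (E 3) (k 0) (k 3)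
            (by linarith) (by linarith)
          obtain ⟨hk12, hs12⟩ := pairlem (E 1) (E 2) (k 1) (k 2)
            (by linarith) (by linarith)
          exact Or.inl ⟨0, 3, 1, 2, by decide, by decide, by decide, by decide,
            by decide, by decide, h03, hk03, hepair 0 3 hs03, h12, hk12, hepair 1 2 hs12⟩
        · -- singleton 1
          obtain ⟨ha, hb⟩ := hfa 1
          rw [if_neg h01, if_pos rfl, if_neg (fun h => h12 h.symm),
            if_neg (fun h => h01 (h03.trans h))] at ha hb
          have s1 := sgsub (E 1) (k 1)
          exact absurd (by linarith : sg (E 1) = 0) (sgne (E 1))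
      · -- all of h01 h02 h03 false : singleton 0
        obtain ⟨ha, hb⟩ := hfa 0
        rw [if_pos rfl, if_neg (fun h => h01 h.symm), if_neg (fun h => h02 h.symm),
          if_neg (fun h => h03 h.symm)] at ha hb
        have s0 := sgsub (E 0) (k 0)
        exact absurd (by linarith : sg (E 0) = 0) (sgne (E 0))
    · -- backward
      rintro (⟨a, b, c, d, hab, hac, had, hbc, hbd, hcd, hνab, hkab, hεab, hνcd, hkcd, hεcd⟩
        | ⟨ν₀, σ, hB | hB⟩)
      · have huniv : ({a, b, c, d} : Finset (Fin 4)) = Finset.univ := by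
          apply Finset.eq_univ_of_card
          rw [Finset.card_insert_of_notMem (by simp [hab, hac, had]),
            Finset.card_insert_of_notMem (by simp [hbc, hbd]),
            Finset.card_insert_of_notMem (by simp [hcd]),
            Finset.card_singleton]
          rfl
        rw [← huniv, Finset.sum_insert (by simp [hab, hac, had]),
          Finset.sum_insert (by simp [hbc, hbd]), Finset.sum_pair hcd]
        rw [hνab, hkab, hεab, hνcd, hkcd, hεcd]
        ring
      · have : ∀ i, ε i * uniOmega N (ν i) (k i)
            = ![uniOmega N ν₀ 0, uniOmega N ν₀ 1, -uniOmega N ν₀ 2, -uniOmega N ν₀ 2] (σ i) :=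
          hB
        rw [Finset.sum_congr rfl (fun i _ => this i), Equiv.sum_comp σ]
        rw [Fin.sum_univ_four]
        simp only [Matrix.cons_val_zero, Matrix.cons_val_one, Matrix.head_cons,
          Matrix.cons_val_two, Matrix.tail_cons, Matrix.cons_val_three]
        simp only [uniOmega, Matrix.cons_val_zero, Matrix.cons_val_one, Matrix.head_cons,
          Matrix.cons_val_two, Matrix.tail_cons]
        ring
      · have : ∀ i, ε i * uniOmega N (ν i) (k i)
            = ![-uniOmega N ν₀ 0, -uniOmega N ν₀ 1, uniOmega N ν₀ 2, uniOmega N ν₀ 2] (σ i) :=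
          hB
        rw [Finset.sum_congr rfl (fun i _ => this i), Equiv.sum_comp σ]
        rw [Fin.sum_univ_four]
        simp only [Matrix.cons_val_zero, Matrix.cons_val_one, Matrix.head_cons,
          Matrix.cons_val_two, Matrix.tail_cons, Matrix.cons_val_three]
        simp only [uniOmega, Matrix.cons_val_zero, Matrix.cons_val_one, Matrix.head_cons,
          Matrix.cons_val_two, Matrix.tail_cons]
        ring
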